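/- For all sufficiently large integers k, the polynomial Δ_k(z) has exactly one root, counted with multiplicity, in the open complex disk |z| < 1/√(8+8k). -/

import Mathlib

open Filter Polynomial

/-- `C_k = (2k-2)!/(k-1)!` as a complex number. -/
noncomputable def CcC (k : ℕ) : ℂ :=
  ((2 * k - 2).factorial : ℂ) / ((k - 1).factorial : ℂ)

/-- The polynomial `p_k(z) = 1 − 2z − (7+8k)z²` over `ℂ`. -/
noncomputable def Ppoly (k : ℕ) : Polynomial ℂ :=
  Polynomial.C 1 - Polynomial.C 2 * Polynomial.X
    - Polynomial.C (7 + 8 * (k : ℂ)) * Polynomial.X ^ 2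

/-- The polynomial `h_k(z) = 1 − z − C_k·z^{2k+1}` over `ℂ`. -/
noncomputable def Hpoly (k : ℕ) : Polynomial ℂ :=
  Polynomial.C 1 - Polynomial.X - Polynomial.C (CcC k) * Polynomial.X ^ (2 * k + 1)

/-- The polynomial `Δ_k(z) = p_k(z) + 4·C_k·z^{2k+1}·h_k(z)` over `ℂ`. -/
noncomputable def Dpoly (k : ℕ) : Polynomial ℂ :=
  Ppoly k + Polynomial.C (4 * CcC k) * Polynomial.X ^ (2 * k + 1) * Hpoly k

noncomputable def aV (k : ℕ) : ℝ := ((2*k-2).factorial : ℝ) / ((k-1).factorial : ℝ)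
noncomputable def sV (k : ℕ) : ℝ := Real.sqrt (8 + 8*k)
noncomputable def rV (k : ℕ) : ℝ := 1 / sV k
noncomputable def etaV (k : ℕ) : ℝ := aV k * (rV k ^ k)^2
-- eval formula
lemma Dpoly_eval (k : ℕ) (z : ℂ) :
    (Dpoly k).eval z = 1 - 2*z - (7 + 8*(k:ℂ))*z^2
      + 4 * CcC k * z^(2*k+1) * (1 - z - CcC k * z^(2*k+1)) := by
  simp [Dpoly, Ppoly, Hpoly]

lemma Dpoly_ne (k : ℕ) : Dpoly k ≠ 0 := by
  intro h
  have := Dpoly_eval k 0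
  rw [h] at this
  simp at this

-- derivative formula
lemma Dpoly_deriv (k : ℕ) (z : ℂ) :
    (derivative (Dpoly k)).eval z
      = -2 - 2*(7 + 8*(k:ℂ))*z
        + 4 * CcC k * ((2*k+1) * z^(2*k) * (1 - z - CcC k * z^(2*k+1))
            + z^(2*k+1) * (-1 - CcC k * (2*k+1) * z^(2*k))) := by
  simp [Dpoly, Ppoly, Hpoly, derivative_mul, derivative_pow]
  ring
open Finset in
lemma abs_pow_sub_pow (x y : ℂ) (M : ℝ) (n : ℕ) (hx : ‖x‖ ≤ M) (hy : ‖y‖ ≤ M) :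
    ‖x^n - y^n‖ ≤ n * M^(n-1) * ‖x - y‖ := by
  have hM : 0 ≤ M := le_trans (norm_nonneg x) hx
  rw [← geom_sum₂_mul, norm_mul]
  have hsum : ‖∑ i ∈ range n, x ^ i * y ^ (n - 1 - i)‖ ≤ n * M^(n-1) := by
    calc ‖∑ i ∈ range n, x ^ i * y ^ (n - 1 - i)‖
        ≤ ∑ i ∈ range n, ‖x ^ i * y ^ (n - 1 - i)‖ := norm_sum_le _ _
      _ ≤ ∑ _i ∈ range n, M^(n-1) := by
          apply Finset.sum_le_sum
          intro i hi
          rw [norm_mul, norm_pow, norm_pow]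
          have hi' : i + (n - 1 - i) = n - 1 := by
            have := Finset.mem_range.1 hi; omega
          calc ‖x‖^i * ‖y‖^(n-1-i) ≤ M^i * M^(n-1-i) := by
                apply mul_le_mul (pow_le_pow_left₀ (norm_nonneg _) hx i)
                  (pow_le_pow_left₀ (norm_nonneg _) hy _) (by positivity) (by positivity)
            _ = M^(n-1) := by rw [← pow_add, hi']
      _ = n * M^(n-1) := by rw [Finset.sum_const, card_range, nsmul_eq_mul]
  exact mul_le_mul_of_nonneg_right hsum (norm_nonneg _)
lemma fact_bound : ∀ n m : ℕ, (m+n).factorial ≤ m.factorial * (m+n)^n := by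
  intro n
  induction n with
  | zero => simp
  | succ n ih =>
    intro m
    have h1 : (m+(n+1)).factorial = (m+n+1) * (m+n).factorial := by
      rw [show m+(n+1) = (m+n)+1 by ring, Nat.factorial_succ]
    rw [h1]
    calc (m+n+1) * (m+n).factorial ≤ (m+n+1) * (m.factorial * (m+n)^n) :=
          Nat.mul_le_mul_left _ (ih m)
      _ ≤ (m+n+1) * (m.factorial * (m+n+1)^n) := by
          apply Nat.mul_le_mul_left
          exact Nat.mul_le_mul_left _ (Nat.pow_le_pow_left (Nat.le_succ _) n)
      _ = m.factorial * (m+(n+1))^(n+1) := by ring_nf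

lemma eta_bound (k : ℕ) (hk : 20 ≤ k) : etaV k ≤ 1/(4^k * (2*(k:ℝ))) := by
  have hk1 : (1:ℝ) ≤ k := by exact_mod_cast Nat.one_le_iff_ne_zero.mpr (by omega)
  have hkk : (k-1) + (k-1) = 2*k-2 := by omega
  have hfb : (2*k-2).factorial ≤ (k-1).factorial * (2*k-2)^(k-1) := by
    have := fact_bound (k-1) (k-1); rwa [hkk] at this
  have haV : aV k ≤ (2*(k:ℝ))^(k-1) := by
    unfold aV
    rw [div_le_iff₀ (by positivity)]
    calc ((2*k-2).factorial : ℝ) ≤ ((k-1).factorial : ℝ) * ((2*k-2 : ℕ):ℝ)^(k-1) := by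
          exact_mod_cast hfb
      _ ≤ ((k-1).factorial : ℝ) * (2*(k:ℝ))^(k-1) := by
          apply mul_le_mul_of_nonneg_left _ (by positivity)
          apply pow_le_pow_left₀ (by positivity)
          have : ((2*k-2 : ℕ):ℝ) ≤ 2*(k:ℝ) := by
            push_cast [Nat.cast_sub (by omega : 2 ≤ 2*k)]; linarith
          exact this
      _ = (2*(k:ℝ))^(k-1) * ((k-1).factorial : ℝ) := by ring
  have hS0 : (0:ℝ) < 8 + 8*k := by nlinarith
  have hs2 : (sV k)^2 = 8 + 8*(k:ℝ) := Real.sq_sqrt (le_of_lt hS0)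
  have hspos : 0 < sV k := Real.sqrt_pos.mpr hS0
  have hrsq : (rV k)^2 = 1/(8+8*(k:ℝ)) := by
    unfold rV; rw [div_pow, hs2]; norm_num
  have h2 : ((rV k)^k)^2 = (1/(8+8*(k:ℝ)))^k := by
    rw [← hrsq]; ring
  have h3 : (1/(8+8*(k:ℝ)))^k ≤ (1/(8*(k:ℝ)))^k := by
    apply pow_le_pow_left₀ (by positivity)
    apply one_div_le_one_div_of_le (by positivity)
    linarith
  have haV0 : 0 ≤ aV k := by unfold aV; positivity
  calc etaV k = aV k * ((rV k)^k)^2 := rfl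
    _ ≤ (2*(k:ℝ))^(k-1) * (1/(8*(k:ℝ)))^k := by
        apply mul_le_mul haV ((h2.le.trans h3)) (by positivity) (by positivity)
    _ = 1/(4^k * (2*(k:ℝ))) := by
        rw [div_pow, one_pow]
        rw [show (8*(k:ℝ))^k = 4^k * (2*(k:ℝ))^k by rw [← mul_pow]; ring_nf]
        rw [show (2*(k:ℝ))^k = (2*(k:ℝ))^(k-1) * (2*(k:ℝ)) by
          rw [← pow_succ]; congr 1; omega]
        field_simp
lemma CcC_eq (k : ℕ) : CcC k = ((aV k : ℝ) : ℂ) := by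
  unfold CcC aV; push_cast; ring

lemma aV_pos (k : ℕ) : 0 < aV k := by unfold aV; positivity

lemma sV_sq (k : ℕ) : (sV k)^2 = 8 + 8*(k:ℝ) := Real.sq_sqrt (by positivity)

lemma sV_pos (k : ℕ) : 0 < sV k := Real.sqrt_pos.mpr (by positivity)

lemma sV_ge (k : ℕ) (hk : 20 ≤ k) : 12 ≤ sV k := by
  have hk20 : (20:ℝ) ≤ k := by exact_mod_cast hk
  rw [show (12:ℝ) = Real.sqrt 144 by
    rw [show (144:ℝ) = 12^2 by norm_num, Real.sqrt_sq]; norm_num]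
  exact Real.sqrt_le_sqrt (by nlinarith)

lemma rV_pos (k : ℕ) : 0 < rV k := by
  unfold rV; have := sV_pos k; positivity

lemma sV_mul_rV (k : ℕ) : sV k * rV k = 1 := by
  unfold rV; field_simp [(sV_pos k).ne']

lemma rV_le (k : ℕ) (hk : 20 ≤ k) : rV k ≤ 1/12 := by
  unfold rV
  rw [div_le_div_iff₀ (sV_pos k) (by norm_num)]
  have := sV_ge k hk; linarith

lemma etaV_nonneg (k : ℕ) : 0 ≤ etaV k := by
  unfold etaV; have := (aV_pos k).le; positivity
lemma four_pow_ge (k : ℕ) (hk : 20 ≤ k) : (1099511627776:ℝ) ≤ 4^k := by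
  calc (1099511627776:ℝ) = 4^20 := by norm_num
    _ ≤ 4^k := pow_le_pow_right₀ (by norm_num) hk

lemma eta_small1 (k : ℕ) (hk : 20 ≤ k) : ((k:ℝ)+1) * etaV k ≤ 1/1000000000000 := by
  have hk1 : (20:ℝ) ≤ k := by exact_mod_cast hk
  have h4 := four_pow_ge k hk
  have hb := eta_bound k hk
  have h0 := etaV_nonneg k
  have h4p : (0:ℝ) < 4^k := by positivity
  calc ((k:ℝ)+1) * etaV k ≤ (2*k) * (1/(4^k*(2*k))) := by
        apply mul_le_mul (by linarith) hb h0 (by positivity)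
    _ = 1/4^k := by field_simp
    _ ≤ 1/1000000000000 := by
        rw [div_le_div_iff₀ h4p (by norm_num)]; linarith

lemma rV_low (k : ℕ) (hk : 20 ≤ k) : 1/(4*(k:ℝ)) ≤ rV k := by
  have hk1 : (1:ℝ) ≤ k := by exact_mod_cast (by omega : 1 ≤ k)
  have h4k : sV k ≤ 4*k := by
    unfold sV
    rw [show (4*(k:ℝ)) = Real.sqrt ((4*k)^2) by rw [Real.sqrt_sq (by positivity)]]
    apply Real.sqrt_le_sqrt; nlinarith
  exact one_div_le_one_div_of_le (sV_pos k) h4k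

lemma eta_small2 (k : ℕ) (hk : 20 ≤ k) : 1000000 * etaV k ≤ rV k := by
  have hk1 : (1:ℝ) ≤ k := by exact_mod_cast (by omega : 1 ≤ k)
  have h4 := four_pow_ge k hk
  have hb := eta_bound k hk
  have h0 := etaV_nonneg k
  have hlow := rV_low k hk
  have h4p : (0:ℝ) < 4^k := by positivity
  calc 1000000 * etaV k ≤ 1000000 * (1/(4^k*(2*k))) := by
        apply mul_le_mul_of_nonneg_left hb (by norm_num)
    _ ≤ 1/(4*(k:ℝ)) := by
        rw [mul_one_div, div_le_div_iff₀ (by positivity) (by positivity)]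
        nlinarith
    _ ≤ rV k := hlow
set_option maxHeartbeats 2000000 in
lemma root_core (k : ℕ) (a s r η : ℝ) (C : ℂ) (hCa : C = (a:ℂ)) (ha : 0 < a)
    (hs12 : 12 ≤ s) (hr : 0 < r) (hr12 : r ≤ 1/12) (hsr : s * r = 1)
    (hη0 : 0 ≤ η) (hη1 : ((k:ℝ)+1) * η ≤ 1/1000000000000) (hη2 : 1000000 * η ≤ r)
    (hηρ : a * (r^k)^2 = η) (hsC : ((s:ℝ):ℂ)^2 = 8 + 8*(k:ℂ))
    (z : ℂ)
    (h0 : 1 - 2*z - (7 + 8*(k:ℂ))*z^2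
      + 4 * C * z^(2*k+1) * (1 - z - C * z^(2*k+1)) = 0)
    (hz : ‖z‖ < r) :
    ∃ v : ℂ, ‖v - 1‖ ≤ η^2 ∧ 1 - η^2 ≤ v.re ∧ ‖v‖ ≤ 1 + η^2 ∧
      (v*v) * ((s:ℝ):ℂ)^2 = ((s:ℝ):ℂ)^2 + 8*C^2*(z^k)^4 ∧
      z * (1 + ((s:ℝ):ℂ)*v) = 1 + 2*C*((z^k)^2*z) ∧
      0.8 * r ≤ ‖z‖ := by
  have hs : (0:ℝ) < s := by linarith
  have hηle : η ≤ 1/1000000000000 := by nlinarith [Nat.cast_nonneg (α := ℝ) k]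
  have hnormC : ‖C‖ = a := by rw [hCa, Complex.norm_real, Real.norm_eq_abs, abs_of_pos ha]
  set w := z^k with hw
  set ρ := r^k with hρ
  have hρ0 : 0 ≤ ρ := by positivity
  have hρr : ρ ≤ 1 := by
    rw [hρ]
    apply pow_le_one₀ hr.le (by linarith)
  have hwn : ‖w‖ ≤ ρ := by
    rw [hw, hρ, norm_pow]
    exact pow_le_pow_left₀ (norm_nonneg z) hz.le k
  -- the root equation
  have hzn : z^(2*k+1) = w^2*z := by rw [hw]; ring
  rw [hzn] at h0
  have hz0 : z ≠ 0 := by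
    rintro rfl
    simp at h0
  have hsC0 : ((s:ℝ):ℂ) ≠ 0 := by
    simpa using hs.ne'
  -- A and its square
  set A : ℂ := 1 - z + 2*C*(w^2*z) with hAdef
  have hA2 : A^2 = z^2*(((s:ℝ):ℂ)^2 + 8*C^2*w^4) := by
    rw [hAdef, hsC]
    linear_combination h0
  set q : ℂ := A / (z*((s:ℝ):ℂ)) with hqdef
  have hq : A = z*((s:ℝ):ℂ)*q := by
    rw [hqdef]; field_simp
  have hq2 : (q*q) * (((s:ℝ)):ℂ)^2 = (((s:ℝ)):ℂ)^2 + 8*C^2*w^4 := by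
    have hzz : (z:ℂ)^2 ≠ 0 := pow_ne_zero _ hz0
    apply mul_left_cancel₀ hzz
    linear_combination hA2 - (A + z*((s:ℝ):ℂ)*q)*hq
  -- v : normalized square root
  set v : ℂ := if 0 ≤ q.re then q else -q with hvdef
  have hv2 : v*v = q*q := by
    rw [hvdef]; split <;> ring
  have hvre : 0 ≤ v.re := by
    rw [hvdef]; split
    · assumption
    · rw [Complex.neg_re]; linarith [lt_of_not_ge (by assumption : ¬ 0 ≤ q.re)]
  have hveq : (v*v) * (((s:ℝ)):ℂ)^2 = (((s:ℝ)):ℂ)^2 + 8*C^2*w^4 := by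
    rw [hv2]; exact hq2
  have hAv : A = z*((s:ℝ):ℂ)*v ∨ A = -(z*((s:ℝ):ℂ)*v) := by
    rw [hvdef]; split
    · left; exact hq
    · right; rw [hq]; ring
  -- norm bounds on v
  have hnorms2 : ‖(((s:ℝ)):ℂ)^2‖ = s^2 := by
    rw [norm_pow, Complex.norm_real, Real.norm_eq_abs, abs_of_pos hs]
  have hvv1 : ‖v*v - 1‖ ≤ η^2 := by
    have hd : v*v - 1 = 8*C^2*w^4 / (((s:ℝ)):ℂ)^2 := by
      rw [eq_div_iff (pow_ne_zero _ hsC0)]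
      linear_combination hveq
    rw [hd, norm_div, hnorms2]
    have h8 : ‖8*C^2*w^4‖ ≤ 8*(a*ρ^2)^2 := by
      rw [norm_mul, norm_mul, norm_pow, norm_pow, hnormC]
      rw [show ‖(8:ℂ)‖ = 8 by norm_num]
      have hw4 : ‖w‖^4 ≤ ρ^4 := pow_le_pow_left₀ (norm_nonneg w) hwn 4
      nlinarith [norm_nonneg w, pow_nonneg (norm_nonneg w) 4]
    rw [hηρ] at h8
    have hs144 : (144:ℝ) ≤ s^2 := by nlinarith
    rw [div_le_iff₀ (by nlinarith)]
    nlinarith [sq_nonneg η]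
  have hv1 : ‖v - 1‖ ≤ η^2 := by
    have h1 : (1:ℝ) ≤ ‖v + 1‖ := by
      have h2 : (v+1).re ≤ ‖v+1‖ := Complex.re_le_norm (v+1)
      rw [Complex.add_re, Complex.one_re] at h2
      linarith
    calc ‖v-1‖ = ‖v-1‖*1 := by ring
      _ ≤ ‖v-1‖*‖v+1‖ := by
          apply mul_le_mul_of_nonneg_left h1 (norm_nonneg _)
      _ = ‖(v-1)*(v+1)‖ := (norm_mul _ _).symm
      _ = ‖v*v-1‖ := by ring_nf
      _ ≤ η^2 := hvv1
  have hvre2 : 1 - η^2 ≤ v.re := by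
    have h2 : (1 - v).re ≤ ‖1 - v‖ := Complex.re_le_norm _
    rw [norm_sub_rev] at h2
    rw [Complex.sub_re, Complex.one_re] at h2
    linarith
  have hvnorm : ‖v‖ ≤ 1 + η^2 := by
    calc ‖v‖ = ‖(v - 1) + 1‖ := by ring_nf
      _ ≤ ‖v-1‖ + ‖(1:ℂ)‖ := norm_add_le _ _
      _ ≤ 1 + η^2 := by rw [norm_one]; linarith
  -- bound on the perturbation term
  have hpert : ‖2*C*(w^2*z)‖ ≤ 2*η*r := by
    rw [norm_mul, norm_mul, norm_mul, norm_pow, hnormC]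
    have h2 : ‖(2:ℂ)‖ = 2 := by norm_num
    rw [h2]
    have : ‖w‖^2 ≤ ρ^2 := pow_le_pow_left₀ (norm_nonneg w) hwn 2
    rw [← hηρ]
    have hb : ‖w‖^2*‖z‖ ≤ ρ^2*r := mul_le_mul this hz.le (norm_nonneg z) (by positivity)
    nlinarith [hb]
  have hL : 1 - 2*η*r ≤ ‖1 + 2*C*(w^2*z)‖ := by
    have := norm_add_le (1 + 2*C*(w^2*z)) (-(2*C*(w^2*z)))
    simp only [add_neg_cancel_right] at this
    rw [norm_one, norm_neg] at this
    linarith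
  -- exclude the minus branch
  rcases hAv with hplusA | hminusA
  · -- plus branch
    have hplus : z * (1 + ((s:ℝ):ℂ)*v) = 1 + 2*C*(w^2*z) := by
      rw [hAdef] at hplusA
      linear_combination -hplusA
    -- lower bound on |z|
    have hub : ‖1 + ((s:ℝ):ℂ)*v‖ ≤ 1.2*s := by
      calc ‖1 + ((s:ℝ):ℂ)*v‖ ≤ ‖(1:ℂ)‖ + ‖((s:ℝ):ℂ)*v‖ := norm_add_le _ _
        _ = 1 + s*‖v‖ := by
            rw [norm_one, norm_mul, Complex.norm_real, Real.norm_eq_abs, abs_of_pos hs]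
        _ ≤ 1 + s*(1+η^2) := by nlinarith
        _ ≤ 1.2*s := by nlinarith
    have hlow : 0.8 * r ≤ ‖z‖ := by
      have hn : ‖z‖ * ‖1 + ((s:ℝ):ℂ)*v‖ = ‖1 + 2*C*(w^2*z)‖ := by
        rw [← norm_mul, hplus]
      have h1 : 1 - 2*η*r ≤ ‖z‖ * (1.2*s) := by
        calc 1 - 2*η*r ≤ ‖z‖ * ‖1 + ((s:ℝ):ℂ)*v‖ := by rw [hn]; exact hL
          _ ≤ ‖z‖ * (1.2*s) := mul_le_mul_of_nonneg_left hub (norm_nonneg z)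
      have h96 : (0.96:ℝ) ≤ 1 - 2*η*r := by nlinarith
      have : 0.8*r*(1.2*s) ≤ ‖z‖*(1.2*s) := by
        have : 0.8*r*(1.2*s) = 0.96 := by
          rw [show 0.8*r*(1.2*s) = 0.96*(s*r) by ring, hsr]; norm_num
        linarith
      have hspos' : 0 < 1.2*s := by linarith
      exact le_of_mul_le_mul_right this hspos'
    exact ⟨v, hv1, hvre2, hvnorm, hveq, hplus, hlow⟩
  · -- minus branch: contradiction
    exfalso
    have hminus : 1 + 2*C*(w^2*z) = z*(1 - ((s:ℝ):ℂ)*v) := by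
      rw [hAdef] at hminusA
      linear_combination hminusA
    have hRB : ‖z*(1 - ((s:ℝ):ℂ)*v)‖ ≤ 1 - r + η^2 := by
      have h1 : ‖1 - ((s:ℝ):ℂ)*v‖ ≤ (s-1) + s*η^2 := by
        calc ‖1 - ((s:ℝ):ℂ)*v‖ = ‖(1 - ((s:ℝ):ℂ)) + ((s:ℝ):ℂ)*(1 - v)‖ := by ring_nf
          _ ≤ ‖1 - ((s:ℝ):ℂ)‖ + ‖((s:ℝ):ℂ)*(1-v)‖ := norm_add_le _ _
          _ ≤ (s-1) + s*η^2 := by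
              have ha1 : ‖1 - ((s:ℝ):ℂ)‖ = s - 1 := by
                rw [show (1:ℂ) - ((s:ℝ):ℂ) = (((1 - s : ℝ)):ℂ) by push_cast; ring]
                rw [Complex.norm_real, Real.norm_eq_abs, abs_of_nonpos (by linarith)]
                ring
              have ha2 : ‖((s:ℝ):ℂ)*(1-v)‖ ≤ s*η^2 := by
                rw [norm_mul, Complex.norm_real, Real.norm_eq_abs, abs_of_pos hs,
                  norm_sub_rev]
                nlinarith
              linarith
      calc ‖z*(1 - ((s:ℝ):ℂ)*v)‖ = ‖z‖*‖1 - ((s:ℝ):ℂ)*v‖ := norm_mul _ _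
        _ ≤ r*((s-1) + s*η^2) := by
            apply mul_le_mul hz.le h1 (norm_nonneg _) hr.le
        _ = (r*s) - r + (r*s)*η^2 := by ring
        _ = 1 - r + η^2 := by rw [mul_comm r s, hsr]; ring
    rw [hminus] at hL
    -- 1 - 2ηr ≤ 1 - r + η²  contradiction
    nlinarith
set_option maxHeartbeats 2000000 in
lemma unique_core (k : ℕ) (hk : 1 ≤ k) (a s r η : ℝ) (C : ℂ) (hCa : C = (a:ℂ)) (ha : 0 < a)
    (hs12 : 12 ≤ s) (hr : 0 < r) (hr12 : r ≤ 1/12) (hsr : s * r = 1)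
    (hη0 : 0 ≤ η) (hη1 : ((k:ℝ)+1) * η ≤ 1/1000000000000)
    (hηρ : a * (r^k)^2 = η)
    (z₁ z₂ : ℂ) (v₁ v₂ : ℂ)
    (hz₁ : ‖z₁‖ < r) (hz₂ : ‖z₂‖ < r)
    (hv₁a : ‖v₁ - 1‖ ≤ η^2) (hv₁b : 1 - η^2 ≤ v₁.re) (hv₁c : ‖v₁‖ ≤ 1 + η^2)
    (hv₂b : 1 - η^2 ≤ v₂.re)
    (he₁ : (v₁*v₁) * ((s:ℝ):ℂ)^2 = ((s:ℝ):ℂ)^2 + 8*C^2*(z₁^k)^4)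
    (he₂ : (v₂*v₂) * ((s:ℝ):ℂ)^2 = ((s:ℝ):ℂ)^2 + 8*C^2*(z₂^k)^4)
    (hp₁ : z₁ * (1 + ((s:ℝ):ℂ)*v₁) = 1 + 2*C*((z₁^k)^2*z₁))
    (hp₂ : z₂ * (1 + ((s:ℝ):ℂ)*v₂) = 1 + 2*C*((z₂^k)^2*z₂)) :
    z₁ = z₂ := by
  have hs : (0:ℝ) < s := by linarith
  have hk0 : (0:ℝ) ≤ k := Nat.cast_nonneg k
  have hηle : η ≤ 1/1000000000000 := by nlinarith
  have hnormC : ‖C‖ = a := by rw [hCa, Complex.norm_real, Real.norm_eq_abs, abs_of_pos ha]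
  set d := ‖z₁ - z₂‖ with hd
  have hd0 : 0 ≤ d := norm_nonneg _
  -- key identity
  have hkey : (z₁ - z₂) * (1 + ((s:ℝ):ℂ)*v₁)
      = 2*C*(z₁^(2*k+1) - z₂^(2*k+1)) - ((s:ℝ):ℂ)*z₂*(v₁ - v₂) := by
    have h₁ : z₁^(2*k+1) = (z₁^k)^2*z₁ := by ring
    have h₂ : z₂^(2*k+1) = (z₂^k)^2*z₂ := by ring
    rw [h₁, h₂]
    linear_combination hp₁ - hp₂
  -- bound |v₁ - v₂|
  have hvd : ‖v₁ - v₂‖ * 1 ≤ (8*a^2/s^2) * ‖z₁^(4*k) - z₂^(4*k)‖ := by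
    have hsum : (1:ℝ) ≤ ‖v₁ + v₂‖ := by
      have h2 : (v₁+v₂).re ≤ ‖v₁+v₂‖ :=
        (Complex.re_le_norm _)
      rw [Complex.add_re] at h2
      nlinarith
    have hprod : (v₁ - v₂) * (v₁ + v₂) * ((s:ℝ):ℂ)^2 = 8*C^2*(z₁^(4*k) - z₂^(4*k)) := by
      have h₁ : z₁^(4*k) = (z₁^k)^4 := by ring
      have h₂ : z₂^(4*k) = (z₂^k)^4 := by ring
      rw [h₁, h₂]
      linear_combination he₁ - he₂
    have hs2 : ((s:ℝ):ℂ)^2 ≠ 0 := by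
      apply pow_ne_zero; simpa using hs.ne'
    have hdd : (v₁ - v₂) * (v₁ + v₂) = 8*C^2*(z₁^(4*k) - z₂^(4*k)) / ((s:ℝ):ℂ)^2 := by
      rw [eq_div_iff hs2]; linear_combination hprod
    have := congrArg norm hdd
    rw [norm_mul, norm_div] at this
    have hns : ‖((s:ℝ):ℂ)^2‖ = s^2 := by
      rw [norm_pow, Complex.norm_real, Real.norm_eq_abs, abs_of_pos hs]
    rw [hns] at this
    have h8 : ‖8*C^2*(z₁^(4*k) - z₂^(4*k))‖ = 8*a^2*‖z₁^(4*k) - z₂^(4*k)‖ := by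
      rw [norm_mul, norm_mul, norm_pow, hnormC]
      norm_num
    rw [h8] at this
    calc ‖v₁ - v₂‖ * 1 ≤ ‖v₁ - v₂‖ * ‖v₁ + v₂‖ :=
          mul_le_mul_of_nonneg_left hsum (norm_nonneg _)
      _ = 8*a^2*‖z₁^(4*k) - z₂^(4*k)‖/s^2 := this
      _ = (8*a^2/s^2) * ‖z₁^(4*k) - z₂^(4*k)‖ := by ring
  -- power difference bounds
  have hpow1 : ‖z₁^(2*k+1) - z₂^(2*k+1)‖ ≤ (2*(k:ℝ)+1) * (r^k)^2 * d := by
    have := abs_pow_sub_pow z₁ z₂ r (2*k+1) hz₁.le hz₂.le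
    rw [show (2*k+1) - 1 = 2*k by omega] at this
    calc ‖z₁^(2*k+1) - z₂^(2*k+1)‖ ≤ (2*k+1 : ℕ) * r^(2*k) * d := this
      _ = (2*(k:ℝ)+1) * (r^k)^2 * d := by push_cast; ring
  have hpow2 : ‖z₁^(4*k) - z₂^(4*k)‖ ≤ (4*(k:ℝ)) * ((r^k)^4 * s) * d := by
    have := abs_pow_sub_pow z₁ z₂ r (4*k) hz₁.le hz₂.le
    have hre : r^(4*k - 1) = (r^k)^4 * s := by
      have h1 : r^(4*k-1) * r = r^(4*k) := by
        rw [← pow_succ]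
        congr 1
        omega
      have h2 : (r^k)^4 * s * r = r^(4*k) := by
        rw [mul_assoc, hsr, mul_one]; ring
      exact mul_right_cancel₀ hr.ne' (h1.trans h2.symm)
    rw [hre] at this
    calc ‖z₁^(4*k) - z₂^(4*k)‖ ≤ (4*k : ℕ) * ((r^k)^4*s) * d := this
      _ = (4*(k:ℝ)) * ((r^k)^4 * s) * d := by push_cast; ring
  -- assemble
  have hlhs : d * (1 + s*(1-η^2)) ≤ ‖(z₁ - z₂) * (1 + ((s:ℝ):ℂ)*v₁)‖ := by
    rw [norm_mul]
    apply mul_le_mul_of_nonneg_left _ hd0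
    have h2 : (1 + ((s:ℝ):ℂ)*v₁).re ≤ ‖1 + ((s:ℝ):ℂ)*v₁‖ :=
      (Complex.re_le_norm _)
    have h3 : (1 + ((s:ℝ):ℂ)*v₁).re = 1 + s*v₁.re := by
      simp [Complex.add_re, Complex.mul_re]
    rw [h3] at h2
    nlinarith
  -- RHS bound
  have hrhs : ‖2*C*(z₁^(2*k+1) - z₂^(2*k+1)) - ((s:ℝ):ℂ)*z₂*(v₁ - v₂)‖
      ≤ (2*(2*(k:ℝ)+1)*η + 32*(k:ℝ)*η^2) * d := by
    apply le_trans (norm_sub_le _ _)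
    have hterm1 : ‖2*C*(z₁^(2*k+1) - z₂^(2*k+1))‖ ≤ 2*(2*(k:ℝ)+1)*η*d := by
      rw [norm_mul, norm_mul, hnormC, show ‖(2:ℂ)‖ = 2 by norm_num]
      calc 2*a*‖z₁^(2*k+1) - z₂^(2*k+1)‖ ≤ 2*a*((2*(k:ℝ)+1) * (r^k)^2 * d) := by
            apply mul_le_mul_of_nonneg_left hpow1 (by positivity)
        _ = 2*(2*(k:ℝ)+1)*(a*(r^k)^2)*d := by ring
        _ = 2*(2*(k:ℝ)+1)*η*d := by rw [hηρ]
    have hterm2 : ‖((s:ℝ):ℂ)*z₂*(v₁ - v₂)‖ ≤ 32*(k:ℝ)*η^2*d := by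
      rw [norm_mul, norm_mul, Complex.norm_real, Real.norm_eq_abs, abs_of_pos hs]
      have hvd' : ‖v₁ - v₂‖ ≤ (8*a^2/s^2) * ((4*(k:ℝ)) * ((r^k)^4 * s) * d) := by
        have := hvd
        rw [mul_one] at this
        apply le_trans this
        apply mul_le_mul_of_nonneg_left hpow2 (by positivity)
      calc s * ‖z₂‖ * ‖v₁ - v₂‖
          ≤ s * r * ((8*a^2/s^2) * ((4*(k:ℝ)) * ((r^k)^4 * s) * d)) := by
            apply mul_le_mul (mul_le_mul_of_nonneg_left hz₂.le hs.le) hvd'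
              (norm_nonneg _) (by positivity)
        _ = 32*(k:ℝ)*(a*(r^k)^2)^2*r*d := by field_simp; ring
        _ = 32*(k:ℝ)*η^2*r*d := by rw [hηρ]
        _ ≤ 32*(k:ℝ)*η^2*d := by
            have hr1 : r ≤ 1 := by linarith
            have hkk : (0:ℝ) ≤ 32*(k:ℝ)*η^2 := by positivity
            nlinarith [mul_le_mul_of_nonneg_right (mul_le_mul_of_nonneg_left hr1 hkk) hd0]
    linarith
  -- conclude
  rw [hkey] at hlhs
  have hfin : d * (1 + s*(1-η^2)) ≤ (2*(2*(k:ℝ)+1)*η + 32*(k:ℝ)*η^2) * d :=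
    le_trans hlhs hrhs
  by_contra hne
  have hdpos : 0 < d := by
    rw [hd, norm_pos_iff]
    exact sub_ne_zero.mpr hne
  have hkη : (k:ℝ)*η ≤ 1/1000000000000 := by nlinarith
  have hsmall : 2*(2*(k:ℝ)+1)*η + 32*(k:ℝ)*η^2 < 1 := by
    nlinarith [mul_le_mul_of_nonneg_right hkη hη0, mul_nonneg hη0 hη0]
  have hX : (2:ℝ) ≤ 1 + s*(1-η^2) := by nlinarith
  have h1 : d * 2 ≤ d * (1+s*(1-η^2)) := mul_le_mul_of_nonneg_left hX hd0
  have h2 : (2*(2*(k:ℝ)+1)*η + 32*(k:ℝ)*η^2)*d < 1*d := mul_lt_mul_of_pos_right hsmall hdpos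
  nlinarith
lemma exists_core (k : ℕ) (a r η : ℝ) (ha : 0 < a) (hr : 0 < r) (hr12 : r ≤ 1/12)
    (hr2 : (8+8*(k:ℝ))*r^2 = 1) (hη0 : 0 ≤ η) (hη2 : 1000000*η ≤ r)
    (hηρ : a*(r^k)^2 = η) :
    ∃ x : ℝ, 0 ≤ x ∧ x < r ∧
      1 - 2*x - (7+8*(k:ℝ))*x^2 + 4*a*x^(2*k+1)*(1 - x - a*x^(2*k+1)) = 0 := by
  have h7 : (7+8*(k:ℝ))*r^2 = 1 - r^2 := by linarith
  set F : ℝ → ℝ := fun x => 1 - 2*x - (7+8*(k:ℝ))*x^2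
      + 4*a*x^(2*k+1)*(1 - x - a*x^(2*k+1)) with hF
  have hcont : Continuous F := by
    rw [hF]; fun_prop
  set x₀ : ℝ := r*(1 - r/4) with hx₀
  have h0le : 0 ≤ x₀ := by rw [hx₀]; nlinarith
  have hx₀r : x₀ < r := by rw [hx₀]; nlinarith
  have hF0 : F 0 = 1 := by rw [hF]; simp
  have hFx₀ : F x₀ < 0 := by
    have h8 : (7+8*(k:ℝ))*x₀^2 = (1-r^2)*(1-r/4)^2 := by
      rw [hx₀]; linear_combination ((1-r/4)^2) * h7
    have hp : 1 - 2*x₀ - (7+8*(k:ℝ))*x₀^2 ≤ -(13/10)*r := by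
      rw [h8, hx₀]
      nlinarith [hr, hr12, sq_nonneg r, sq_nonneg (1-r/4)]
    have hxr : x₀^(2*k+1) ≤ r^(2*k+1) := pow_le_pow_left₀ h0le hx₀r.le _
    have hx₀n : 0 ≤ x₀^(2*k+1) := by positivity
    have hrr : r^(2*k+1) = (r^k)^2*r := by ring
    have haxη : a*x₀^(2*k+1) ≤ η*r := by
      calc a*x₀^(2*k+1) ≤ a*r^(2*k+1) := by nlinarith
        _ = (a*(r^k)^2)*r := by rw [hrr]; ring
        _ = η*r := by rw [hηρ]
    have htail : 4*a*x₀^(2*k+1)*(1 - x₀ - a*x₀^(2*k+1)) ≤ 4*(η*r) := by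
      have hfac : 1 - x₀ - a*x₀^(2*k+1) ≤ 1 := by nlinarith
      have h4an : 0 ≤ 4*a*x₀^(2*k+1) := by positivity
      calc 4*a*x₀^(2*k+1)*(1 - x₀ - a*x₀^(2*k+1)) ≤ 4*a*x₀^(2*k+1)*1 :=
            mul_le_mul_of_nonneg_left hfac h4an
        _ = 4*(a*x₀^(2*k+1)) := by ring
        _ ≤ 4*(η*r) := by nlinarith
    have hsum : F x₀ ≤ -(13/10)*r + 4*(η*r) := by
      rw [hF]; simp only []; linarith
    have hηr : 4*(η*r) < (13/10)*r := by nlinarith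
    exact lt_of_le_of_lt hsum (by linarith)
  obtain ⟨x, hxmem, hfx⟩ := intermediate_value_Icc' h0le hcont.continuousOn
    (Set.mem_Icc.mpr ⟨hFx₀.le, by rw [hF0]; norm_num⟩)
  exact ⟨x, hxmem.1, lt_of_le_of_lt hxmem.2 hx₀r, hfx⟩

set_option maxHeartbeats 1000000 in
lemma deriv_core (k : ℕ) (a s r η : ℝ) (C : ℂ) (hCa : C = (a:ℂ)) (ha : 0 < a)
    (hs12 : 12 ≤ s) (hr : 0 < r) (hr12 : r ≤ 1/12) (hsr : s * r = 1)
    (hη0 : 0 ≤ η) (hη1 : ((k:ℝ)+1) * η ≤ 1/1000000000000)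
    (hηρ : a * (r^k)^2 = η)
    (hs2 : s^2 = 8+8*(k:ℝ))
    (z : ℂ) (hz : ‖z‖ < r) (hlow : 0.8*r ≤ ‖z‖)
    (hd : -2 - 2*(7 + 8*(k:ℂ))*z
        + 4 * C * ((2*k+1) * z^(2*k) * (1 - z - C * z^(2*k+1))
            + z^(2*k+1) * (-1 - C * (2*k+1) * z^(2*k))) = 0) : False := by
  have hs : (0:ℝ) < s := by linarith
  have hk0 : (0:ℝ) ≤ k := Nat.cast_nonneg k
  have hηle : η ≤ 1/1000000000000 := by nlinarith
  have hkη : (k:ℝ)*η ≤ 1/1000000000000 := by nlinarith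
  have hnormC : ‖C‖ = a := by rw [hCa, Complex.norm_real, Real.norm_eq_abs, abs_of_pos ha]
  have hp1 : z^(2*k) = (z^k)^2 := by ring
  have hp2 : z^(2*k+1) = (z^k)^2*z := by ring
  rw [hp1, hp2] at hd
  set w := z^k with hw
  set ρ := r^k with hρ
  have hρ0 : 0 ≤ ρ := by positivity
  have hρr : ρ ≤ 1 := by rw [hρ]; exact pow_le_one₀ hr.le (by linarith)
  have hwn : ‖w‖ ≤ ρ := by
    rw [hw, hρ, norm_pow]
    exact pow_le_pow_left₀ (norm_nonneg z) hz.le k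
  have hw2 : ‖w^2‖ ≤ ρ^2 := by
    rw [norm_pow]; exact pow_le_pow_left₀ (norm_nonneg w) hwn 2
  have heq : 4 * C * ((2*k+1) * w^2 * (1 - z - C * (w^2*z))
      + w^2*z * (-1 - C * (2*k+1) * w^2)) = 2 + 2*(7 + 8*(k:ℂ))*z := by
    linear_combination hd
  have hn2k : ‖((2*k+1 : ℕ):ℂ)‖ = 2*(k:ℝ)+1 := by
    rw [show (((2*k+1 : ℕ)):ℂ) = (((2*(k:ℝ)+1 : ℝ)):ℂ) by push_cast; ring]
    rw [Complex.norm_real, Real.norm_eq_abs, abs_of_pos (by positivity)]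
  have hcast : ((2:ℂ)*(k:ℂ)+1) = (((2*(k:ℝ)+1 : ℝ)):ℂ) := by push_cast; ring
  have hn2k' : ‖(2*(k:ℂ)+1)‖ = 2*(k:ℝ)+1 := by
    rw [hcast, Complex.norm_real, Real.norm_eq_abs, abs_of_pos (by positivity)]
  -- bound inner factors
  have hηr1 : η*r ≤ 1 := by nlinarith
  have hn1 : ‖1 - z - C * (w^2*z)‖ ≤ 2 := by
    have h1 : ‖C * (w^2*z)‖ ≤ η*r := by
      rw [norm_mul, norm_mul, hnormC]
      calc a * (‖w^2‖ * ‖z‖) ≤ a * (ρ^2 * r) := by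
            apply mul_le_mul_of_nonneg_left _ ha.le
            apply mul_le_mul hw2 hz.le (norm_nonneg _) (by positivity)
        _ = (a*ρ^2)*r := by ring
        _ = η*r := by rw [hρ] at *; rw [← hηρ]
    calc ‖1 - z - C * (w^2*z)‖ ≤ ‖1 - z‖ + ‖C * (w^2*z)‖ := norm_sub_le _ _
      _ ≤ (‖(1:ℂ)‖ + ‖z‖) + η*r := by
          have := norm_sub_le (1:ℂ) z
          linarith [norm_sub_le (1:ℂ) z, h1]
      _ ≤ 2 := by rw [norm_one]; nlinarith
  have hkη1 : (2*(k:ℝ)+1)*η ≤ 1 := by nlinarith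
  have hn2 : ‖-1 - C * (2*(k:ℂ)+1) * w^2‖ ≤ 2 := by
    have h1 : ‖C * (2*(k:ℂ)+1) * w^2‖ ≤ (2*(k:ℝ)+1)*η := by
      rw [norm_mul, norm_mul, hnormC, hn2k']
      calc a * (2*(k:ℝ)+1) * ‖w^2‖ ≤ a * (2*(k:ℝ)+1) * ρ^2 := by
            apply mul_le_mul_of_nonneg_left hw2 (by positivity)
        _ = (2*(k:ℝ)+1)*(a*ρ^2) := by ring
        _ = (2*(k:ℝ)+1)*η := by rw [hρ] at *; rw [← hηρ]
    calc ‖-1 - C * (2*(k:ℂ)+1) * w^2‖ ≤ ‖(-1 : ℂ)‖ + ‖C * (2*(k:ℂ)+1) * w^2‖ :=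
          norm_sub_le _ _
      _ ≤ 2 := by rw [norm_neg, norm_one]; linarith
  -- RHS bound
  have hT1 : ‖(2*(k:ℂ)+1) * w^2 * (1 - z - C * (w^2*z))‖ ≤ (2*(k:ℝ)+1) * ρ^2 * 2 := by
    rw [norm_mul, norm_mul, hn2k']
    apply mul_le_mul _ hn1 (norm_nonneg _) (by positivity)
    apply mul_le_mul_of_nonneg_left hw2 (by positivity)
  have hT2 : ‖w^2*z * (-1 - C * (2*(k:ℂ)+1) * w^2)‖ ≤ ρ^2*r*2 := by
    rw [norm_mul, norm_mul]
    apply mul_le_mul _ hn2 (norm_nonneg _) (by positivity)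
    apply mul_le_mul hw2 hz.le (norm_nonneg _) (by positivity)
  have hRHS : ‖4 * C * ((2*(k:ℂ)+1) * w^2 * (1 - z - C * (w^2*z))
      + w^2*z * (-1 - C * (2*(k:ℂ)+1) * w^2))‖ ≤ 1 := by
    rw [norm_mul, norm_mul, hnormC, show ‖(4:ℂ)‖ = 4 by norm_num]
    have hT : ‖(2*(k:ℂ)+1) * w^2 * (1 - z - C * (w^2*z))
        + w^2*z * (-1 - C * (2*(k:ℂ)+1) * w^2)‖ ≤ (2*(k:ℝ)+1) * ρ^2 * 2 + ρ^2*r*2 := by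
      apply le_trans (norm_add_le _ _)
      linarith
    have haρ : a*ρ^2 = η := by rw [hρ]; exact hηρ
    calc 4 * a * ‖(2*(k:ℂ)+1) * w^2 * (1 - z - C * (w^2*z))
        + w^2*z * (-1 - C * (2*(k:ℂ)+1) * w^2)‖
        ≤ 4 * a * ((2*(k:ℝ)+1) * ρ^2 * 2 + ρ^2*r*2) := by
          apply mul_le_mul_of_nonneg_left hT (by positivity)
      _ = 8*(2*(k:ℝ)+1)*(a*ρ^2) + 8*(a*ρ^2)*r := by ring
      _ = 8*(2*(k:ℝ)+1)*η + 8*η*r := by rw [haρ]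
      _ ≤ 1 := by nlinarith
  -- LHS lower bound
  have h72 : ‖2*(7 + 8*(k:ℂ))*z‖ = 2*(7+8*(k:ℝ))*‖z‖ := by
    rw [norm_mul, norm_mul, show ‖(2:ℂ)‖ = 2 by norm_num,
      show ((7:ℂ) + 8*(k:ℂ)) = (((7+8*(k:ℝ)):ℝ):ℂ) by push_cast; ring,
      Complex.norm_real, Real.norm_eq_abs, abs_of_pos (by positivity)]
  have hs2r : s^2*r = s := by rw [show s^2*r = s*(s*r) by ring, hsr, mul_one]
  have h7r : (7+8*(k:ℝ))*r = s - r := by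
    rw [show (7+8*(k:ℝ)) = s^2 - 1 by linarith]
    nlinarith [hs2r]
  have hLHS : 17 ≤ ‖2 + 2*(7 + 8*(k:ℂ))*z‖ := by
    have htr : ‖2*(7 + 8*(k:ℂ))*z‖ ≤ ‖2 + 2*(7 + 8*(k:ℂ))*z‖ + 2 := by
      have h := norm_add_le (2 + 2*(7 + 8*(k:ℂ))*z) (-2)
      rw [show (2 + 2*(7 + 8*(k:ℂ))*z) + (-2) = 2*(7 + 8*(k:ℂ))*z by ring] at h
      rw [show ‖(-2 : ℂ)‖ = 2 by norm_num] at h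
      exact h
    have hge : 2*(7+8*(k:ℝ))*(0.8*r) ≤ 2*(7+8*(k:ℝ))*‖z‖ := by
      apply mul_le_mul_of_nonneg_left hlow (by positivity)
    have hval : 2*(7+8*(k:ℝ))*(0.8*r) = 1.6*(s - r) := by
      rw [show 2*(7+8*(k:ℝ))*(0.8*r) = 1.6*((7+8*(k:ℝ))*r) by ring, h7r]
    rw [hval] at hge
    rw [h72] at htr
    nlinarith
  rw [heq] at hRHS
  linarith

set_option maxHeartbeats 2000000 in
open Classical in
/-- For all sufficiently large integers `k`, the polynomial `Δ_k(z)` has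
exactly one root, counted with multiplicity, in the open complex disk `|z| < 1/√(8+8k)`. -/
theorem statement4 :
    ∀ᶠ k : ℕ in atTop,
      (((Dpoly k).roots.filter
          (fun z : ℂ => ‖z‖ < 1 / Real.sqrt (8 + 8 * k))).card) = 1 := by
  rw [eventually_atTop]
  refine ⟨20, fun k hk => ?_⟩
  have hk1 : 1 ≤ k := by omega
  have ha := aV_pos k
  have hs12 := sV_ge k hk
  have hr := rV_pos k
  have hr12 := rV_le k hk
  have hsr := sV_mul_rV k
  have hη0 := etaV_nonneg k
  have hη1 := eta_small1 k hk
  have hη2 := eta_small2 k hk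
  have hCa := CcC_eq k
  have hs2 := sV_sq k
  have hηρ : aV k * (rV k^k)^2 = etaV k := rfl
  have hcast : ((sV k : ℝ):ℂ)^2 = 8 + 8*(k:ℂ) := by
    rw [show (((sV k : ℝ)):ℂ)^2 = ((((sV k)^2 : ℝ)):ℂ) by push_cast; ring, hs2]
    push_cast; ring
  have hsrsq : (sV k * rV k)^2 = 1 := by rw [hsr]; norm_num
  have hr2 : (8+8*(k:ℝ))*(rV k)^2 = 1 := by nlinarith [hsrsq, hs2]
  -- existence of a root in the disk
  obtain ⟨x, hx0, hxr, hfx⟩ :=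
    exists_core k (aV k) (rV k) (etaV k) ha hr hr12 hr2 hη0 hη2 hηρ
  set z₀ : ℂ := ((x:ℝ):ℂ) with hz₀def
  have hz₀eval : (Dpoly k).eval z₀ = 0 := by
    have h2 := congrArg (fun t : ℝ => (t:ℂ)) hfx
    push_cast at h2
    rw [Dpoly_eval, hCa]
    push_cast
    linear_combination h2
  have hz₀n : ‖z₀‖ < rV k := by
    rw [hz₀def, Complex.norm_real, Real.norm_eq_abs, abs_of_nonneg hx0]
    exact hxr
  -- uniqueness
  have huniq : ∀ z : ℂ, (Dpoly k).eval z = 0 → ‖z‖ < rV k → z = z₀ := by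
    intro z hzev hzn
    obtain ⟨v, hv1, hv2, hv3, hv4, hv5, hv6⟩ :=
      root_core k (aV k) (sV k) (rV k) (etaV k) (CcC k) hCa ha hs12 hr hr12 hsr
        hη0 hη1 hη2 hηρ hcast z ((Dpoly_eval k z).symm.trans hzev) hzn
    obtain ⟨u, hu1, hu2, hu3, hu4, hu5, hu6⟩ :=
      root_core k (aV k) (sV k) (rV k) (etaV k) (CcC k) hCa ha hs12 hr hr12 hsr
        hη0 hη1 hη2 hηρ hcast z₀ ((Dpoly_eval k z₀).symm.trans hz₀eval) hz₀n
    exact unique_core k hk1 (aV k) (sV k) (rV k) (etaV k) (CcC k) hCa ha hs12 hr hr12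
      hsr hη0 hη1 hηρ z z₀ v u hzn hz₀n hv1 hv2 hv3 hu2 hv4 hu4 hv5 hu5
  have hne := Dpoly_ne k
  -- simplicity of the root z₀
  have hsimple : rootMultiplicity z₀ (Dpoly k) = 1 := by
    have hpos : 0 < rootMultiplicity z₀ (Dpoly k) :=
      (rootMultiplicity_pos hne).mpr hz₀eval
    have hle : rootMultiplicity z₀ (Dpoly k) ≤ 1 := by
      by_contra hgt
      push_neg at hgt
      have hdvd : (X - Polynomial.C z₀)^2 ∣ Dpoly k :=
        dvd_trans (pow_dvd_pow _ (by omega)) (pow_rootMultiplicity_dvd _ _)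
      obtain ⟨g, hg⟩ := hdvd
      have hder : (derivative (Dpoly k)).eval z₀ = 0 := by
        rw [hg]
        simp [derivative_mul, derivative_pow]
      obtain ⟨v, hv1, hv2, hv3, hv4, hv5, hv6⟩ :=
        root_core k (aV k) (sV k) (rV k) (etaV k) (CcC k) hCa ha hs12 hr hr12 hsr
          hη0 hη1 hη2 hηρ hcast z₀ ((Dpoly_eval k z₀).symm.trans hz₀eval) hz₀n
      exact deriv_core k (aV k) (sV k) (rV k) (etaV k) (CcC k) hCa ha hs12 hr hr12
        hsr hη0 hη1 hηρ hs2 z₀ hz₀n hv6 ((Dpoly_deriv k z₀).symm.trans hder)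
    omega
  -- assemble the multiset computation
  have hpred : ‖z₀‖ < 1 / Real.sqrt (8 + 8 * (k:ℝ)) := by
    exact hz₀n
  have hall : ∀ b ∈ (Dpoly k).roots.filter
      (fun z : ℂ => ‖z‖ < 1 / Real.sqrt (8 + 8 * k)), b = z₀ := by
    intro b hb
    rw [Multiset.mem_filter] at hb
    obtain ⟨hb1, hb2⟩ := hb
    have hb3 : (Dpoly k).eval b = 0 := (mem_roots'.mp hb1).2
    have hb4 : ‖b‖ < rV k := by
      exact hb2
    exact huniq b hb3 hb4
  have hrep := Multiset.eq_replicate_card.mpr hall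
  have hcount : ((Dpoly k).roots.filter
      (fun z : ℂ => ‖z‖ < 1 / Real.sqrt (8 + 8 * k))).count z₀ = 1 := by
    rw [Multiset.count_filter, if_pos hpred, count_roots, hsimple]
  rw [hrep, Multiset.count_replicate_self] at hcount
  exact hcount
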